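/- arXiv:1603.03477 — 5 statements merged into one kernel-verified Lean document; each statement's English description precedes it below -/
import Mathlib

section
/- Let B be the incidence matrix of a connected graph, W ≻ 0 diagonal (edge weights), R ⪰ 0 diagonal with R_i ≻ 0 for at least one node i, M ≻ 0, and v a constant vector. Then the system ṗ = -R M^{-1} p - B W q + v, q̇ = B^T M^{-1} p, restricted to the invariant set {q ∈ im(B^T)}, has a unique equilibrium (p̄, q̄) with p̄ = M·1·β where β = (1^T R 1)^{-1} 1^T v. -/
open Matrix

/-- The mass-spring-damper network `ṗ = -R M⁻¹ p - B W q + v`, `q̇ = Bᵀ M⁻¹ p`,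
restricted to the invariant set `{q ∈ im Bᵀ}`, has a unique equilibrium `(p̄, q̄)`,
and `p̄ = β • M 𝟙` with `β = (𝟙ᵀ R 𝟙)⁻¹ 𝟙ᵀ v`. -/
theorem unique_equilibrium (n m : ℕ) (hn : 0 < n)
    (G : SimpleGraph (Fin n)) (hconn : G.Connected)
    (ends : Fin m → Fin n × Fin n)
    (hadj : ∀ k, G.Adj (ends k).1 (ends k).2)
    (hcover : ∀ i j, G.Adj i j → ∃ k, ends k = (i, j) ∨ ends k = (j, i))
    (B : Matrix (Fin n) (Fin m) ℝ)
    (hB : ∀ i k, B i k =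
      if i = (ends k).1 then 1 else if i = (ends k).2 then -1 else 0)
    (M R : Matrix (Fin n) (Fin n) ℝ) (W : Matrix (Fin m) (Fin m) ℝ)
    (hM : M.PosDef)
    (hRdiag : ∀ i j, i ≠ j → R i j = 0) (hRnn : ∀ i, 0 ≤ R i i)
    (hRpos : ∃ i, 0 < R i i)
    (hWdiag : ∀ i j, i ≠ j → W i j = 0) (hWpos : ∀ i, 0 < W i i)
    (v : Fin n → ℝ) :
    (∃! z : (Fin n → ℝ) × (Fin m → ℝ),
        (∃ s : Fin n → ℝ, z.2 = Bᵀ.mulVec s) ∧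
        -(R.mulVec (M⁻¹.mulVec z.1)) - (B * W).mulVec z.2 + v = 0 ∧
        Bᵀ.mulVec (M⁻¹.mulVec z.1) = 0) ∧
      (∀ z : (Fin n → ℝ) × (Fin m → ℝ),
        ((∃ s : Fin n → ℝ, z.2 = Bᵀ.mulVec s) ∧
          -(R.mulVec (M⁻¹.mulVec z.1)) - (B * W).mulVec z.2 + v = 0 ∧
          Bᵀ.mulVec (M⁻¹.mulVec z.1) = 0) →
        z.1 = ((∑ i, ∑ j, R i j)⁻¹ * ∑ i, v i) • M.mulVec (fun _ => 1)) := by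
  classical
  set one : Fin n → ℝ := fun _ => (1 : ℝ) with hone
  set β : ℝ := (∑ i, ∑ j, R i j)⁻¹ * ∑ i, v i with hβ
  have i0 : Fin n := ⟨0, hn⟩
  have hne : ∀ k : Fin m, (ends k).1 ≠ (ends k).2 := fun k => (hadj k).ne
  -- componentwise formula for Bᵀ *ᵥ x
  have hBT : ∀ (x : Fin n → ℝ) (k : Fin m),
      Bᵀ.mulVec x k = x (ends k).1 - x (ends k).2 := by
    intro x k
    have hterm : ∀ i, Bᵀ k i * x i =
        (if (ends k).1 = i then x (ends k).1 else 0)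
        + (if (ends k).2 = i then -x (ends k).2 else 0) := by
      intro i
      rw [transpose_apply, hB]
      by_cases h1 : i = (ends k).1
      · subst h1
        rw [if_pos rfl, if_pos rfl, if_neg (fun h => hne k h.symm)]
        ring
      · by_cases h2 : i = (ends k).2
        · subst h2
          rw [if_neg h1, if_pos rfl, if_neg (fun h => h1 h.symm), if_pos rfl]
          ring
        · rw [if_neg h1, if_neg h2, if_neg (fun h => h1 h.symm),
            if_neg (fun h => h2 h.symm)]
          ring
    calc Bᵀ.mulVec x k = ∑ i, Bᵀ k i * x i := rfl
      _ = ∑ i, ((if (ends k).1 = i then x (ends k).1 else 0)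
          + (if (ends k).2 = i then -x (ends k).2 else 0)) :=
        Finset.sum_congr rfl fun i _ => hterm i
      _ = x (ends k).1 - x (ends k).2 := by
        rw [Finset.sum_add_distrib, Finset.sum_ite_eq, Finset.sum_ite_eq]
        simp [sub_eq_add_neg]
  -- Bᵀ 𝟙 = 0
  have hB1 : Bᵀ.mulVec one = 0 := by
    funext k; rw [hBT]; simp [hone]
  -- ker Bᵀ : constant vectors
  have hconst : ∀ x : Fin n → ℝ, Bᵀ.mulVec x = 0 → ∀ i j, x i = x j := by
    intro x hx
    have hedge : ∀ k, x (ends k).1 = x (ends k).2 := by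
      intro k
      have := congrFun hx k
      rw [hBT] at this
      simpa [sub_eq_zero] using this
    have hadj' : ∀ a b, G.Adj a b → x a = x b := by
      intro a b hab
      obtain ⟨k, hk | hk⟩ := hcover a b hab
      · have := hedge k; rw [hk] at this; exact this
      · have := hedge k; rw [hk] at this; exact this.symm
    intro i j
    obtain ⟨w⟩ := hconn i j
    induction w with
    | nil => rfl
    | cons h p ih => exact (hadj' _ _ h).trans ih
  -- diagonal actions
  have hWmul : ∀ (y : Fin m → ℝ) k, W.mulVec y k = W k k * y k := by
    intro y k
    calc W.mulVec y k = ∑ l, W k l * y l := rfl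
      _ = W k k * y k := by
        apply Finset.sum_eq_single
        · intro l _ hl; rw [hWdiag k l (Ne.symm hl)]; ring
        · intro h; exact absurd (Finset.mem_univ k) h
  have hRmul : ∀ (c : ℝ) i, R.mulVec (fun _ => c) i = c * R i i := by
    intro c i
    calc R.mulVec (fun _ => c) i = ∑ j, R i j * c := rfl
      _ = c * R i i := by
        rw [Finset.sum_eq_single i]
        · ring
        · intro l _ hl; rw [hRdiag i l (Ne.symm hl)]; ring
        · intro h; exact absurd (Finset.mem_univ i) h
  -- quadratic form
  have hquad : ∀ x : Fin n → ℝ,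
      x ⬝ᵥ (B * W * Bᵀ).mulVec x = ∑ k, W k k * (Bᵀ.mulVec x k) ^ 2 := by
    intro x
    have h1 : (B * W * Bᵀ).mulVec x = B.mulVec (W.mulVec (Bᵀ.mulVec x)) := by
      rw [mulVec_mulVec, mulVec_mulVec]
    rw [h1, dotProduct_mulVec, ← mulVec_transpose]
    calc Bᵀ.mulVec x ⬝ᵥ W.mulVec (Bᵀ.mulVec x)
        = ∑ k, Bᵀ.mulVec x k * W.mulVec (Bᵀ.mulVec x) k := rfl
      _ = ∑ k, W k k * (Bᵀ.mulVec x k) ^ 2 := by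
        apply Finset.sum_congr rfl
        intro k _
        rw [hWmul]
        ring
  have hker : ∀ x : Fin n → ℝ, (B * W * Bᵀ).mulVec x = 0 → Bᵀ.mulVec x = 0 := by
    intro x hx
    have h0 : ∑ k, W k k * (Bᵀ.mulVec x k) ^ 2 = 0 := by
      rw [← hquad, hx, dotProduct_zero]
    funext k
    have hnn : ∀ k ∈ Finset.univ, (0:ℝ) ≤ W k k * (Bᵀ.mulVec x k) ^ 2 :=
      fun k _ => mul_nonneg (hWpos k).le (sq_nonneg _)
    have := (Finset.sum_eq_zero_iff_of_nonneg hnn).mp h0 k (Finset.mem_univ k)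
    have h2 : (Bᵀ.mulVec x k) ^ 2 = 0 := by
      rcases mul_eq_zero.mp this with h | h
      · exact absurd h (hWpos k).ne'
      · exact h
    have := pow_eq_zero_iff (n := 2) (by norm_num) |>.mp h2
    simpa using this
  -- M inverse facts
  have hMdet : IsUnit M.det := isUnit_iff_ne_zero.mpr hM.det_pos.ne'
  have hMinv1 : ∀ x : Fin n → ℝ, M⁻¹.mulVec (M.mulVec x) = x := by
    intro x; rw [mulVec_mulVec, nonsing_inv_mul M hMdet, one_mulVec]
  have hMinv2 : ∀ x : Fin n → ℝ, M.mulVec (M⁻¹.mulVec x) = x := by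
    intro x; rw [mulVec_mulVec, mul_nonsing_inv M hMdet, one_mulVec]
  -- sums over R
  have sumR : ∑ i, ∑ j, R i j = ∑ i, R i i := by
    apply Finset.sum_congr rfl
    intro i _
    rw [Finset.sum_eq_single i]
    · intro l _ hl; exact hRdiag i l (Ne.symm hl)
    · intro h; exact absurd (Finset.mem_univ i) h
  have sumRpos : 0 < ∑ i, R i i := by
    obtain ⟨i, hi⟩ := hRpos
    exact Finset.sum_pos' (fun j _ => hRnn j) ⟨i, Finset.mem_univ i, hi⟩
  have hβsum : β * ∑ i, R i i = ∑ i, v i := by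
    rw [hβ, sumR]
    field_simp
  -- column sums of B*W vanish
  have hsumBW : ∀ q : Fin m → ℝ, ∑ i, (B * W).mulVec q i = 0 := by
    intro q
    have h1 : ∑ i, (B * W).mulVec q i = one ⬝ᵥ (B * W).mulVec q := by
      simp [dotProduct, hone]
    rw [h1, dotProduct_mulVec, ← vecMul_vecMul]
    have h2 : one ᵥ* B = 0 := by rw [← mulVec_transpose, hB1]
    rw [h2, zero_vecMul, zero_dotProduct]
  -- key uniqueness claim for the momentum
  have key : ∀ z : (Fin n → ℝ) × (Fin m → ℝ),
      ((∃ s : Fin n → ℝ, z.2 = Bᵀ.mulVec s) ∧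
        -(R.mulVec (M⁻¹.mulVec z.1)) - (B * W).mulVec z.2 + v = 0 ∧
        Bᵀ.mulVec (M⁻¹.mulVec z.1) = 0) →
      M⁻¹.mulVec z.1 = fun _ => β := by
    intro z ⟨_, heq1, heq2⟩
    set u := M⁻¹.mulVec z.1 with hu
    set α := u i0 with hα
    have huc : u = fun _ => α := funext fun j => hconst u heq2 j i0
    -- sum the first equation
    have hsum : ∀ i, (B * W).mulVec z.2 i = v i - (R.mulVec u) i := by
      intro i
      have := congrFun heq1 i
      simp only [Pi.add_apply, Pi.sub_apply, Pi.neg_apply, Pi.zero_apply] at this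
      linarith
    have hRu : ∀ i, R.mulVec u i = α * R i i := by
      intro i; rw [huc]; exact hRmul α i
    have h0 : (0:ℝ) = ∑ i, v i - α * ∑ i, R i i := by
      rw [← hsumBW z.2]
      rw [Finset.mul_sum, ← Finset.sum_sub_distrib]
      apply Finset.sum_congr rfl
      intro i _
      rw [hsum i, hRu i]
    have hαβ : α = β := by
      have h1 : α * ∑ i, R i i = ∑ i, v i := by linarith
      have := hβsum
      have h2 : α * ∑ i, R i i = β * ∑ i, R i i := by rw [h1, this]
      exact mul_right_cancel₀ sumRpos.ne' h2
    rw [huc, hαβ]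
  have keyp : ∀ z : (Fin n → ℝ) × (Fin m → ℝ),
      ((∃ s : Fin n → ℝ, z.2 = Bᵀ.mulVec s) ∧
        -(R.mulVec (M⁻¹.mulVec z.1)) - (B * W).mulVec z.2 + v = 0 ∧
        Bᵀ.mulVec (M⁻¹.mulVec z.1) = 0) →
      z.1 = β • M.mulVec one := by
    intro z hz
    have h1 := key z hz
    have h2 : M.mulVec (M⁻¹.mulVec z.1) = z.1 := hMinv2 z.1
    rw [h1] at h2
    rw [← h2]
    have : (fun _ : Fin n => β) = β • one := by funext i; simp [hone]
    rw [this, mulVec_smul]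
  -- linear-algebra existence of q̄
  set A := B * W * Bᵀ with hA
  set L : (Fin n → ℝ) →ₗ[ℝ] (Fin n → ℝ) := A.mulVecLin with hL
  have hA0 : ∀ x, A.mulVec x = (B * W).mulVec (Bᵀ.mulVec x) := by
    intro x; rw [mulVec_mulVec]
  let f : (Fin n → ℝ) →ₗ[ℝ] ℝ :=
    { toFun := fun x => ∑ i, x i
      map_add' := by intro x y; simp [Finset.sum_add_distrib]
      map_smul' := by intro c x; simp [Finset.mul_sum] }
  have hone0 : one ≠ 0 := by
    intro h
    have := congrFun h i0
    simp [hone] at this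
  have hkerL : LinearMap.ker L = Submodule.span ℝ {one} := by
    apply le_antisymm
    · intro x hx
      have hx0 : A.mulVec x = 0 := hx
      have hBx : Bᵀ.mulVec x = 0 := hker x hx0
      have : x = x i0 • one := by
        funext j
        simp [hone, hconst x hBx j i0]
      exact Submodule.mem_span_singleton.mpr ⟨x i0, this.symm⟩
    · rw [Submodule.span_le, Set.singleton_subset_iff]
      show L one = 0
      show A.mulVec one = 0
      rw [hA0, hB1, mulVec_zero]
  have hfin : Module.finrank ℝ (Fin n → ℝ) = n := Module.finrank_fin_fun ℝ
  have hfsurj : Function.Surjective f := by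
    intro c
    refine ⟨Pi.single i0 c, ?_⟩
    show ∑ i, Pi.single i0 c i = c
    simp
  have hfrange : LinearMap.range f = ⊤ := LinearMap.range_eq_top.mpr hfsurj
  have hkerf : Module.finrank ℝ (LinearMap.ker f) = n - 1 := by
    have h1 := LinearMap.finrank_range_add_finrank_ker f
    rw [hfrange, hfin, finrank_top, Module.finrank_self] at h1
    omega
  have hkerL1 : Module.finrank ℝ (LinearMap.ker L) = 1 := by
    rw [hkerL]; exact finrank_span_singleton hone0
  have hrangeL : Module.finrank ℝ (LinearMap.range L) = n - 1 := by
    have h1 := LinearMap.finrank_range_add_finrank_ker L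
    rw [hkerL1, hfin] at h1
    omega
  have hle : LinearMap.range L ≤ LinearMap.ker f := by
    rintro _ ⟨x, rfl⟩
    show ∑ i, A.mulVec x i = 0
    rw [hA0]
    exact hsumBW _
  have hrk : LinearMap.range L = LinearMap.ker f :=
    Submodule.eq_of_le_of_finrank_eq hle (by rw [hrangeL, hkerf])
  set t : Fin n → ℝ := fun i => v i - β * R i i with ht
  have htker : t ∈ LinearMap.ker f := by
    show ∑ i, (v i - β * R i i) = 0
    rw [Finset.sum_sub_distrib, ← Finset.mul_sum, hβsum, sub_self]
  rw [← hrk] at htker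
  obtain ⟨s, hs⟩ := htker
  have hs' : A.mulVec s = t := hs
  set qbar : Fin m → ℝ := Bᵀ.mulVec s with hq
  set pbar : Fin n → ℝ := β • M.mulVec one with hp
  have hMp : M⁻¹.mulVec pbar = fun _ => β := by
    rw [hp, mulVec_smul, hMinv1]
    funext i; simp [hone]
  have hBWq : (B * W).mulVec qbar = t := by
    rw [hq, ← hA0, hs']
  have hcond : (∃ s : Fin n → ℝ, qbar = Bᵀ.mulVec s) ∧
      -(R.mulVec (M⁻¹.mulVec pbar)) - (B * W).mulVec qbar + v = 0 ∧
      Bᵀ.mulVec (M⁻¹.mulVec pbar) = 0 := by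
    refine ⟨⟨s, rfl⟩, ?_, ?_⟩
    · rw [hMp, hBWq]
      funext i
      simp only [Pi.add_apply, Pi.sub_apply, Pi.neg_apply, Pi.zero_apply]
      rw [hRmul β i, ht]
      ring
    · rw [hMp]
      have : (fun _ : Fin n => β) = β • one := by funext i; simp [hone]
      rw [this, mulVec_smul, hB1, smul_zero]
  constructor
  · refine ⟨(pbar, qbar), hcond, ?_⟩
    rintro ⟨p', q'⟩ hz'
    obtain ⟨⟨s', hs'2⟩, heq1', heq2'⟩ := hz'
    have hp' : p' = β • M.mulVec one := keyp (p', q') ⟨⟨s', hs'2⟩, heq1', heq2'⟩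
    have hu' : M⁻¹.mulVec p' = fun _ => β := key (p', q') ⟨⟨s', hs'2⟩, heq1', heq2'⟩
    -- q' = qbar
    have hBWq' : (B * W).mulVec q' = t := by
      funext i
      have := congrFun heq1' i
      simp only [Pi.add_apply, Pi.sub_apply, Pi.neg_apply, Pi.zero_apply] at this
      have hR : R.mulVec (M⁻¹.mulVec p') i = β * R i i := by
        rw [hu']; exact hRmul β i
      rw [ht]
      dsimp only
      linarith [hR ▸ this]
    have hs'3 : q' = Bᵀ.mulVec s' := hs'2
    have h4 : A.mulVec s' = t := by rw [hA0, ← hs'3, hBWq']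
    have hdiff : A.mulVec (s' - s) = 0 := by
      rw [mulVec_sub, hs', h4, sub_self]
    have hBd : Bᵀ.mulVec (s' - s) = 0 := hker _ hdiff
    have : q' = qbar := by
      rw [hs'3, hq]
      have h5 : Bᵀ.mulVec s' - Bᵀ.mulVec s = 0 := by
        rw [← mulVec_sub]; exact hBd
      exact sub_eq_zero.mp h5
    exact Prod.ext hp' this
  · exact keyp
end

section
/- Let L = [[L_dd, L_di],[L_di^T, L_uu]] be the weighted Laplacian of a connected graph with both node groups nonempty, and let L̃_u = L_uu - L_di^T L_dd^{-1} L_di be the Schur complement (Kron reduction). Then L̃_u is symmetric positive semidefinite and ker(L̃_u) = span{1}. -/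
open Matrix

lemma psd_isUnit_posDef {n : Type*} [Fintype n] [DecidableEq n] {A : Matrix n n ℝ}
    (hA : A.PosSemidef) (h : IsUnit A) : A.PosDef := by
  refine posDef_iff_dotProduct_mulVec.mpr ⟨hA.1, fun x hx => ?_⟩
  rcases (hA.dotProduct_mulVec_nonneg x).lt_or_eq with hlt | heq
  · exact hlt
  · exfalso
    apply hx
    have h0 : A *ᵥ x = 0 := (hA.dotProduct_mulVec_zero_iff x).mp heq.symm
    have hdet : IsUnit A.det := (isUnit_iff_isUnit_det A).mp h
    have : A⁻¹ *ᵥ (A *ᵥ x) = x := by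
      rw [mulVec_mulVec, nonsing_inv_mul A hdet, one_mulVec]
    rw [h0, mulVec_zero] at this
    exact this.symm

/-- Kron reduction: the Schur complement `L̃_u = L_uu - L_diᵀ L_dd⁻¹ L_di` of a
connected weighted Laplacian is PSD with `ker L̃_u = span 𝟙`. -/
theorem kron_reduction_laplacian (nd nu : ℕ) (hnd : 0 < nd) (hnu : 0 < nu)
    (L : Matrix (Fin nd ⊕ Fin nu) (Fin nd ⊕ Fin nu) ℝ)
    (hL : L.PosSemidef)
    (hker : ∀ x : Fin nd ⊕ Fin nu → ℝ, L.mulVec x = 0 ↔ ∃ c : ℝ, x = fun _ => c)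
    (hdd : IsUnit (L.submatrix Sum.inl Sum.inl)) :
    (L.submatrix Sum.inr Sum.inr -
        (L.submatrix Sum.inl Sum.inr)ᵀ * (L.submatrix Sum.inl Sum.inl)⁻¹ *
          L.submatrix Sum.inl Sum.inr).PosSemidef ∧
      ∀ x : Fin nu → ℝ,
        (L.submatrix Sum.inr Sum.inr -
          (L.submatrix Sum.inl Sum.inr)ᵀ * (L.submatrix Sum.inl Sum.inl)⁻¹ *
            L.submatrix Sum.inl Sum.inr).mulVec x = 0 ↔ ∃ c : ℝ, x = fun _ => c := by
  set A := L.submatrix Sum.inl Sum.inl with hA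
  set B := L.submatrix Sum.inl Sum.inr with hB
  set D := L.submatrix Sum.inr Sum.inr with hD
  have hdet : IsUnit A.det := (isUnit_iff_isUnit_det A).mp hdd
  have hBH : Bᴴ = Bᵀ := by ext i j; simp [conjTranspose_apply]
  have hCB : L.submatrix Sum.inr Sum.inl = Bᵀ := by
    ext i j
    simpa [B] using (hL.1.apply (Sum.inr i) (Sum.inl j)).symm
  have hLblocks : L = fromBlocks A B Bᵀ D := by
    ext i j
    cases i <;> cases j <;> simp [fromBlocks, A, B, D, ← hCB]
  -- PSD part
  have hApsd : A.PosSemidef := hL.submatrix Sum.inl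
  have hApos : A.PosDef := psd_isUnit_posDef hApsd hdd
  obtain ⟨iA⟩ := hdd.nonempty_invertible
  have hpsd : (D - Bᵀ * A⁻¹ * B).PosSemidef := by
    have := (PosDef.fromBlocks₁₁ B D hApos).mp (by rw [hBH, ← hLblocks]; exact hL)
    rwa [hBH] at this
  refine ⟨hpsd, fun x => ?_⟩
  constructor
  · -- S x = 0 → x constant
    intro hx
    set yd : Fin nd → ℝ := -((A⁻¹ * B) *ᵥ x) with hyd
    have hy : L *ᵥ Sum.elim yd x = 0 := by
      rw [hLblocks, fromBlocks_mulVec]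
      simp only [Sum.elim_comp_inl, Sum.elim_comp_inr]
      have h1 : A *ᵥ yd + B *ᵥ x = 0 := by
        rw [hyd, mulVec_neg, mulVec_mulVec, ← Matrix.mul_assoc,
          mul_nonsing_inv A hdet, Matrix.one_mul, neg_add_cancel]
      have h2 : Bᵀ *ᵥ yd + D *ᵥ x = 0 := by
        have hBy : Bᵀ *ᵥ yd = -((Bᵀ * A⁻¹ * B) *ᵥ x) := by
          rw [hyd, mulVec_neg, mulVec_mulVec, Matrix.mul_assoc]
        have hDx : D *ᵥ x = (Bᵀ * A⁻¹ * B) *ᵥ x :=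
          sub_eq_zero.mp (by rw [← sub_mulVec]; exact hx)
        rw [hBy, hDx, neg_add_cancel]
      rw [h1, h2]
      ext (i | i) <;> simp
    obtain ⟨c, hc⟩ := (hker _).mp hy
    exact ⟨c, funext fun i => congrFun hc (Sum.inr i)⟩
  · -- x constant → S x = 0
    rintro ⟨c, rfl⟩
    have hy : L *ᵥ (fun _ => c) = 0 := (hker _).mpr ⟨c, rfl⟩
    have hy' : L *ᵥ Sum.elim (fun _ => c : Fin nd → ℝ) (fun _ => c) = 0 := by
      convert hy using 2
      ext (i | i) <;> rfl
    rw [hLblocks, fromBlocks_mulVec] at hy'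
    simp only [Sum.elim_comp_inl, Sum.elim_comp_inr] at hy'
    have h1 : A *ᵥ (fun _ => c) + B *ᵥ (fun _ => c) = 0 := funext fun i => congrFun hy' (Sum.inl i)
    have h2 : Bᵀ *ᵥ (fun _ => c) + D *ᵥ (fun _ => c) = 0 := funext fun i => congrFun hy' (Sum.inr i)
    have hBc : B *ᵥ (fun _ => c) = -(A *ᵥ (fun _ => c)) := by linear_combination (norm := module) h1
    have hinv : A⁻¹ *ᵥ (B *ᵥ (fun _ => c)) = -(fun _ => c : Fin nd → ℝ) := by
      rw [hBc, mulVec_neg, mulVec_mulVec, nonsing_inv_mul A hdet, one_mulVec]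
    rw [sub_mulVec]
    have : (Bᵀ * A⁻¹ * B) *ᵥ (fun _ => c) = Bᵀ *ᵥ (A⁻¹ *ᵥ (B *ᵥ (fun _ => c))) := by
      rw [mulVec_mulVec, mulVec_mulVec]
    rw [this, hinv, mulVec_neg, sub_neg_eq_add]
    linear_combination (norm := module) h2
end

section
/- (Conservation of momentum at steady state) Let p_u(t), q(t) solve ṗ_u = -B_u W q, q̇ = B_u^T M_u^{-1} p_u, with q(t) bounded for all t ≥ 0, where B_u^T has full column rank, M_u ≻ 0, W ≻ 0, and 1^T B_u = -1^T B_d with B_d W q(t) ≡ 0. Then 1^T p_u(t) = 0 for all t ≥ 0. -/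
open Matrix

lemma dot_hasDerivAt {n : ℕ} (v : Fin n → ℝ) {f : ℝ → Fin n → ℝ} {f' : Fin n → ℝ}
    {t : ℝ} (hf : HasDerivAt f f' t) :
    HasDerivAt (fun s => v ⬝ᵥ f s) (v ⬝ᵥ f') t := by
  simp only [dotProduct]
  exact HasDerivAt.fun_sum (fun i _ => ((hasDerivAt_pi.mp hf) i).const_mul (v i))

/-- Conservation of momentum at steady state: if `ṗ_u = -B_u W q`,
`q̇ = B_uᵀ M_u⁻¹ p_u`, with `q` bounded, `B_uᵀ` injective, `𝟙ᵀB_u = -𝟙ᵀB_d` and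
`B_d W q(t) ≡ 0`, then `𝟙ᵀ p_u(t) = 0` for all `t ≥ 0`. -/
theorem conservation_of_momentum (nd nu m : ℕ)
    (Bd : Matrix (Fin nd) (Fin m) ℝ) (Bu : Matrix (Fin nu) (Fin m) ℝ)
    (Mu : Matrix (Fin nu) (Fin nu) ℝ) (W : Matrix (Fin m) (Fin m) ℝ)
    (hMu : Mu.PosDef) (hW : W.PosDef)
    (hinj : ∀ x : Fin nu → ℝ, Buᵀ.mulVec x = 0 → x = 0)
    (hones : (fun _ => (1 : ℝ)) ᵥ* Bu = -((fun _ => (1 : ℝ)) ᵥ* Bd))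
    (pu : ℝ → Fin nu → ℝ) (q : ℝ → Fin m → ℝ)
    (hpu : ∀ t, HasDerivAt pu (-((Bu * W).mulVec (q t))) t)
    (hq : ∀ t, HasDerivAt q ((Buᵀ * Mu⁻¹).mulVec (pu t)) t)
    (hBd : ∀ t, (Bd * W).mulVec (q t) = 0)
    (hbound : ∃ c : ℝ, ∀ t ≥ (0 : ℝ), ‖q t‖ ≤ c) :
    ∀ t ≥ (0 : ℝ), (fun _ => (1 : ℝ)) ⬝ᵥ pu t = 0 := by
  classical
  set ones : Fin nu → ℝ := fun _ => (1 : ℝ) with hones_def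
  -- Step 1: 1ᵀ pu is constant
  set g : ℝ → ℝ := fun t => ones ⬝ᵥ pu t with hg_def
  have hgderiv : ∀ t, HasDerivAt g 0 t := by
    intro t
    have h0 : ones ⬝ᵥ (-((Bu * W).mulVec (q t))) = 0 := by
      rw [dotProduct_neg, dotProduct_mulVec, ← vecMul_vecMul, hones, neg_vecMul,
        neg_dotProduct, neg_neg, vecMul_vecMul, ← dotProduct_mulVec, hBd, dotProduct_zero]
    simpa [h0] using dot_hasDerivAt ones (hpu t)
  have hgconst : ∀ t : ℝ, g t = g 0 := by
    intro t
    exact is_const_of_deriv_eq_zero (fun s => (hgderiv s).differentiableAt)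
      (fun s => (hgderiv s).deriv) t 0
  set c : ℝ := g 0 with hc_def
  -- Step 2: Bu.mulVec is surjective
  have hMudet : IsUnit Mu.det := isUnit_iff_ne_zero.mpr (ne_of_gt hMu.det_pos)
  have hsurj : Function.Surjective Bu.mulVecLin := by
    have hinj' : Function.Injective (Buᵀ).mulVecLin := by
      rw [injective_iff_map_eq_zero']
      intro x
      constructor
      · exact fun h => hinj x h
      · intro h; rw [h]; simp
    have hrankT : (Buᵀ).rank = nu := by
      rw [Matrix.rank, LinearMap.finrank_range_of_inj hinj', Module.finrank_fin_fun]
    have hrank : Bu.rank = nu := by rw [← Matrix.rank_transpose, hrankT]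
    have htop : LinearMap.range Bu.mulVecLin = ⊤ := by
      apply Submodule.eq_top_of_finrank_eq
      rw [← Matrix.rank, hrank, Module.finrank_fin_fun]
    exact LinearMap.range_eq_top.mp htop
  obtain ⟨y, hy⟩ := hsurj (Mu.mulVec ones)
  rw [Matrix.mulVecLin_apply] at hy
  -- Mu and Mu⁻¹ are symmetric
  have hMuT : Muᵀ = Mu := by
    have := hMu.1.eq
    rwa [Matrix.conjTranspose_eq_transpose_of_trivial] at this
  have hMuinvT : (Mu⁻¹)ᵀ = Mu⁻¹ := by rw [Matrix.transpose_nonsing_inv, hMuT]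
  -- Step 3: derivative of y ⬝ᵥ q t equals c
  set h : ℝ → ℝ := fun t => y ⬝ᵥ q t with hh_def
  have hhderiv : ∀ t, HasDerivAt h c t := by
    intro t
    have key : y ⬝ᵥ ((Buᵀ * Mu⁻¹).mulVec (pu t)) = c := by
      rw [dotProduct_mulVec, ← vecMul_vecMul, vecMul_transpose, hy]
      have : (Mu.mulVec ones) ᵥ* Mu⁻¹ = ones := by
        rw [← mulVec_transpose, hMuinvT, mulVec_mulVec, Matrix.nonsing_inv_mul Mu hMudet,
          one_mulVec]
      rw [this]
      exact hgconst t
    simpa [key] using dot_hasDerivAt y (hq t)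
  -- Step 4: h t = h 0 + c * t
  have hlin : ∀ t : ℝ, h t = h 0 + c * t := by
    intro t
    have hk : ∀ s : ℝ, HasDerivAt (fun u => h u - c * u) 0 s := by
      intro s
      simpa using (hhderiv s).fun_sub ((hasDerivAt_id s).const_mul c)
    have := is_const_of_deriv_eq_zero (fun s => (hk s).differentiableAt)
      (fun s => (hk s).deriv) t 0
    simp only [mul_zero, sub_zero] at this
    linarith
  -- Step 5: boundedness forces c = 0
  obtain ⟨cb, hcb⟩ := hbound
  set K : ℝ := (∑ i, |y i|) * max cb 0 with hK_def
  have hK0 : 0 ≤ K := mul_nonneg (Finset.sum_nonneg fun i _ => abs_nonneg _) (le_max_right _ _)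
  have hhbnd : ∀ t ≥ (0:ℝ), |h t| ≤ K := by
    intro t ht
    calc |h t| = |∑ i, y i * q t i| := by simp [hh_def, dotProduct]
      _ ≤ ∑ i, |y i * q t i| := Finset.abs_sum_le_sum_abs _ _
      _ ≤ ∑ i, |y i| * max cb 0 := by
          apply Finset.sum_le_sum
          intro i _
          rw [abs_mul]
          apply mul_le_mul_of_nonneg_left _ (abs_nonneg _)
          calc |q t i| ≤ ‖q t‖ := norm_le_pi_norm (q t) i
            _ ≤ cb := hcb t ht
            _ ≤ max cb 0 := le_max_left _ _
      _ = K := by rw [hK_def, Finset.sum_mul]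
  have hc0 : c = 0 := by
    by_contra hc
    have habs : 0 < |c| := abs_pos.mpr hc
    set T : ℝ := (K + |h 0| + 1) / |c| with hT_def
    have hT0 : 0 ≤ T := div_nonneg (by positivity) habs.le
    have h1 : |c * T| = K + |h 0| + 1 := by
      rw [abs_mul, abs_of_nonneg hT0, hT_def]
      field_simp
    have h2 : |c * T| ≤ K + |h 0| := by
      have := hhbnd T hT0
      rw [hlin T] at this
      calc |c * T| = |(h 0 + c * T) - h 0| := by ring_nf
        _ ≤ |h 0 + c * T| + |h 0| := abs_sub _ _
        _ ≤ K + |h 0| := by linarith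
    linarith
  intro t _
  calc (fun _ => (1:ℝ)) ⬝ᵥ pu t = g t := rfl
    _ = c := hgconst t
    _ = 0 := hc0
end

section
/- Consider the observed system ẋ = A x, y = C x with A = [[0, -M^{-1}L̃],[I, 0]] and C = [[L_i, 0],[R_u, 0],[0, 1^T M]], where M ≻ 0, L̃ ⪰ 0 with ker(L̃) = span{1}, and 1 ∉ ker(L_i). Then the pair (C, A) is observable if and only if for every eigenvalue μ of M^{-1}L̃, ker(M^{-1}L̃ - μI) ∩ ker(L_i) ∩ ker(R_u) = {0}. -/
open Matrix

private lemma diag_list_prod {k : ℕ} (l : List ℝ) (d : Fin k → ℝ) :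
    (l.map (fun μ => Matrix.diagonal d - μ • (1 : Matrix (Fin k) (Fin k) ℝ))).prod
      = Matrix.diagonal (fun j => (l.map (fun μ => d j - μ)).prod) := by
  induction l with
  | nil => simp
  | cons a t ih =>
    rw [List.map_cons, List.prod_cons, ih]
    simp [Matrix.smul_one_eq_diagonal, Matrix.diagonal_sub, Matrix.diagonal_mul_diagonal]

private lemma conj_list_prod {k : ℕ} (P Q : Matrix (Fin k) (Fin k) ℝ)
    (hQP : Q * P = 1) (l : List ℝ) (g : ℝ → Matrix (Fin k) (Fin k) ℝ) :
    (l.map (fun μ => P * g μ * Q)).prod = P * (l.map g).prod * Q := by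
  have hPQ : P * Q = 1 := mul_eq_one_comm.2 hQP
  induction l with
  | nil => simp [hPQ]
  | cons a t ih =>
    rw [List.map_cons, List.prod_cons, ih, List.map_cons, List.prod_cons]
    calc P * g a * Q * (P * (t.map g).prod * Q)
        = P * g a * (Q * P) * ((t.map g).prod * Q) := by
          simp only [Matrix.mul_assoc]
      _ = P * (g a * (t.map g).prod) * Q := by rw [hQP]; simp only [Matrix.mul_one, Matrix.mul_assoc]

open scoped MatrixOrder in
private lemma exists_ann {k : ℕ} {M Lt : Matrix (Fin k) (Fin k) ℝ}
    (hM : M.PosDef) (hLt : Lt.PosSemidef) :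
    ∃ l : List ℝ, (l.map (fun μ => (M⁻¹ * Lt) - μ • (1 : Matrix (Fin k) (Fin k) ℝ))).prod = 0 := by
  set Q := CFC.sqrt M with hQdef
  have hQps : Q.PosSemidef := (CFC.sqrt_nonneg M).posSemidef
  have hQsq : Q * Q = M := by
    have := CFC.sq_sqrt M hM.posSemidef.nonneg; rwa [pow_two] at this
  have hQdet : IsUnit Q.det := by
    have : IsUnit (Q.det * Q.det) := by
      rw [← Matrix.det_mul, hQsq]
      exact isUnit_iff_ne_zero.2 (ne_of_gt hM.det_pos)
    exact isUnit_mul_self_iff.1 this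
  have hQQi : Q * Q⁻¹ = 1 := Matrix.mul_nonsing_inv Q hQdet
  have hQiQ : Q⁻¹ * Q = 1 := Matrix.nonsing_inv_mul Q hQdet
  set S : Matrix (Fin k) (Fin k) ℝ := Q⁻¹ * Lt * Q⁻¹ with hSdef
  have hQherm : Qᴴ = Q := hQps.isHermitian
  have hS : S.IsHermitian := by
    show Sᴴ = S
    rw [hSdef, Matrix.conjTranspose_mul, Matrix.conjTranspose_mul,
      Matrix.conjTranspose_nonsing_inv, hQherm, hLt.isHermitian]
    simp only [Matrix.mul_assoc]
  set U : Matrix (Fin k) (Fin k) ℝ := (hS.eigenvectorUnitary : Matrix (Fin k) (Fin k) ℝ) with hUdef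
  have hUstar : U * star U = 1 := hS.eigenvectorUnitary.2.2
  have hstarU : star U * U = 1 := hS.eigenvectorUnitary.2.1
  set d : Fin k → ℝ := (RCLike.ofReal ∘ hS.eigenvalues) with hddef
  have hspec : S = U * Matrix.diagonal d * star U := hS.spectral_theorem
  refine ⟨(List.finRange k).map hS.eigenvalues, ?_⟩
  -- first: S - μ • 1 = U * (diagonal d - μ•1) * star U
  have hfac : ∀ μ : ℝ, S - μ • 1 = U * (Matrix.diagonal d - μ • 1) * star U := by
    intro μ
    rw [Matrix.mul_sub, Matrix.sub_mul, ← hspec]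
    congr 1
    rw [Matrix.mul_smul, Matrix.mul_one, Matrix.smul_mul, hUstar]
  have hfac2 : ∀ μ : ℝ, (M⁻¹ * Lt) - μ • 1 = Q⁻¹ * (S - μ • 1) * Q := by
    intro μ
    rw [Matrix.mul_sub, Matrix.sub_mul]
    congr 1
    · rw [hSdef]
      have hMinv : M⁻¹ = Q⁻¹ * Q⁻¹ := by rw [← hQsq, Matrix.mul_inv_rev]
      rw [hMinv]
      simp only [Matrix.mul_assoc, hQiQ, Matrix.mul_one]
    · rw [Matrix.mul_smul, Matrix.mul_one, Matrix.smul_mul, hQiQ]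
  calc (((List.finRange k).map hS.eigenvalues).map
          (fun μ => (M⁻¹ * Lt) - μ • (1 : Matrix (Fin k) (Fin k) ℝ))).prod
      = Q⁻¹ * (((List.finRange k).map hS.eigenvalues).map
          (fun μ => S - μ • (1 : Matrix (Fin k) (Fin k) ℝ))).prod * Q := by
        rw [← conj_list_prod Q⁻¹ Q hQQi]
        congr 1
        apply List.map_congr_left
        intro μ _
        exact hfac2 μ
    _ = Q⁻¹ * (U * (((List.finRange k).map hS.eigenvalues).map
          (fun μ => Matrix.diagonal d - μ • (1 : Matrix (Fin k) (Fin k) ℝ))).prod * star U) * Q := by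
        rw [← conj_list_prod U (star U) hstarU]
        congr 2
        congr 1
        apply List.map_congr_left
        intro μ _
        exact hfac μ
    _ = 0 := by
        rw [diag_list_prod]
        have : (Matrix.diagonal fun j =>
            (((List.finRange k).map hS.eigenvalues).map (fun μ => d j - μ)).prod) = 0 := by
          have hz : ∀ j : Fin k, (((List.finRange k).map hS.eigenvalues).map
              (fun μ => d j - μ)).prod = 0 := by
            intro j
            apply List.prod_eq_zero
            rw [List.map_map, List.mem_map]
            exact ⟨j, List.mem_finRange j, by simp [hddef]⟩
          rw [funext hz]
          simp [Matrix.diagonal_zero]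
        rw [this]
        simp


private lemma pow_eigen {k : ℕ} (B : Matrix (Fin k) (Fin k) ℝ) (v : Fin k → ℝ) (μ : ℝ)
    (h : B.mulVec v = μ • v) (m : ℕ) : (B ^ m).mulVec v = μ ^ m • v := by
  induction m with
  | zero => simp
  | succ n ih =>
    rw [pow_succ, ← Matrix.mulVec_mulVec, h, Matrix.mulVec_smul, ih, pow_succ]
    rw [smul_smul, mul_comm]

private lemma key_aux {k ra : ℕ} (B : Matrix (Fin k) (Fin k) ℝ)
    (Li : Matrix (Fin ra) (Fin k) ℝ) (w : Fin k → ℝ)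
    (h : ∀ m : ℕ, Li.mulVec ((B ^ m).mulVec w) = 0) (l : List ℝ) :
    ∀ m : ℕ, Li.mulVec (((B ^ m) * (l.map (fun μ => B - μ • 1)).prod).mulVec w) = 0 := by
  induction l with
  | nil => intro m; simpa using h m
  | cons a t ih =>
    intro m
    rw [List.map_cons, List.prod_cons]
    have : B ^ m * ((B - a • 1) * (t.map (fun μ => B - μ • 1)).prod)
        = B ^ (m + 1) * (t.map (fun μ => B - μ • 1)).prod
          - a • (B ^ m * (t.map (fun μ => B - μ • 1)).prod) := by
      rw [pow_succ, sub_mul, smul_mul_assoc, Matrix.one_mul, mul_sub, ← Matrix.mul_assoc,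
        mul_smul_comm]
    rw [this, Matrix.sub_mulVec, Matrix.mulVec_sub, Matrix.smul_mulVec,
      Matrix.mulVec_smul, ih (m + 1), ih m, smul_zero, sub_zero]

private lemma key_lemma {k ra : ℕ} (B Ru : Matrix (Fin k) (Fin k) ℝ)
    (Li : Matrix (Fin ra) (Fin k) ℝ)
    (hRHS : ∀ (μ : ℝ) (v : Fin k → ℝ),
      B.mulVec v = μ • v → Li.mulVec v = 0 → Ru.mulVec v = 0 → v = 0)
    (l : List ℝ) :
    ∀ w : Fin k → ℝ, ((l.map (fun μ => B - μ • 1)).prod).mulVec w = 0 →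
      (∀ m : ℕ, Li.mulVec ((B ^ m).mulVec w) = 0) →
      (∀ m : ℕ, Ru.mulVec ((B ^ m).mulVec w) = 0) → w = 0 := by
  induction l with
  | nil => intro w hw _ _; simpa using hw
  | cons a t ih =>
    intro w hw hLi hRu
    set w' := ((t.map (fun μ => B - μ • 1)).prod).mulVec w with hw'def
    have hev : B.mulVec w' = a • w' := by
      have h0 : (B - a • 1).mulVec w' = 0 := by
        rw [hw'def, Matrix.mulVec_mulVec]
        rw [List.map_cons, List.prod_cons] at hw
        exact hw
      rw [Matrix.sub_mulVec, sub_eq_zero] at h0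
      rw [h0, Matrix.smul_mulVec, Matrix.one_mulVec]
    have hLi' : Li.mulVec w' = 0 := by
      have := key_aux B Li w hLi t 0
      simpa [hw'def] using this
    have hRu' : Ru.mulVec w' = 0 := by
      have := key_aux B Ru w hRu t 0
      simpa [hw'def] using this
    have hw'0 : w' = 0 := hRHS a w' hev hLi' hRu'
    exact ih w hw'0 hLi hRu

private lemma pow_blocks {k : ℕ} (B : Matrix (Fin k) (Fin k) ℝ) (m : ℕ) :
    (Matrix.fromBlocks 0 (-B) 1 0 : Matrix (Fin k ⊕ Fin k) (Fin k ⊕ Fin k) ℝ) ^ (2 * m)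
      = Matrix.fromBlocks ((-B) ^ m) 0 0 ((-B) ^ m) ∧
    (Matrix.fromBlocks 0 (-B) 1 0 : Matrix (Fin k ⊕ Fin k) (Fin k ⊕ Fin k) ℝ) ^ (2 * m + 1)
      = Matrix.fromBlocks 0 ((-B) ^ m * (-B)) ((-B) ^ m) 0 := by
  induction m with
  | zero =>
    constructor
    · simp [Matrix.fromBlocks_one]
    · simp
  | succ n ih =>
    have h2 : 2 * (n + 1) = 2 * n + 1 + 1 := by ring
    have heven : (Matrix.fromBlocks 0 (-B) 1 0 : Matrix (Fin k ⊕ Fin k) (Fin k ⊕ Fin k) ℝ)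
        ^ (2 * (n + 1)) = Matrix.fromBlocks ((-B) ^ (n + 1)) 0 0 ((-B) ^ (n + 1)) := by
      rw [h2, pow_succ, ih.2, Matrix.fromBlocks_multiply]
      simp [pow_succ]
    refine ⟨heven, ?_⟩
    rw [pow_succ, heven, Matrix.fromBlocks_multiply]
    simp


/-- For `A = [[0, -M⁻¹L̃],[I, 0]]` and outputs `C = [[L_i, 0],[R_u, 0],[0, 𝟙ᵀM]]`,
the pair `(C, A)` is observable iff for every eigenvalue `μ` of `M⁻¹L̃`,
`ker(M⁻¹L̃ - μI) ∩ ker(L_i) ∩ ker(R_u) = {0}`. -/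
theorem observability_iff_eigenvector_condition (k ra : ℕ)
    (M Lt Ru : Matrix (Fin k) (Fin k) ℝ) (Li : Matrix (Fin ra) (Fin k) ℝ)
    (hM : M.PosDef) (hLt : Lt.PosSemidef) (hRu : Ru.PosSemidef)
    (hker : ∀ x : Fin k → ℝ, Lt.mulVec x = 0 ↔ ∃ c : ℝ, x = fun _ => c)
    (hones : Li.mulVec (fun _ => 1) ≠ 0)
    (A : Matrix (Fin k ⊕ Fin k) (Fin k ⊕ Fin k) ℝ)
    (hA : A = Matrix.fromBlocks 0 (-(M⁻¹ * Lt)) 1 0) :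
    (∀ x : Fin k ⊕ Fin k → ℝ,
        (∀ j : ℕ,
          Li.mulVec (fun i => ((A ^ j).mulVec x) (Sum.inl i)) = 0 ∧
          Ru.mulVec (fun i => ((A ^ j).mulVec x) (Sum.inl i)) = 0 ∧
          (fun _ => (1 : ℝ)) ⬝ᵥ M.mulVec (fun i => ((A ^ j).mulVec x) (Sum.inr i)) = 0) →
        x = 0) ↔
      (∀ (μ : ℝ) (v : Fin k → ℝ),
        (M⁻¹ * Lt).mulVec v = μ • v → Li.mulVec v = 0 → Ru.mulVec v = 0 → v = 0) := by
  subst hA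
  set B : Matrix (Fin k) (Fin k) ℝ := M⁻¹ * Lt with hBdef
  have hMdet : IsUnit M.det := isUnit_iff_ne_zero.2 (ne_of_gt hM.det_pos)
  have hMB : M * B = Lt := by
    rw [hBdef, ← Matrix.mul_assoc, Matrix.mul_nonsing_inv M hMdet, Matrix.one_mul]
  have hLtones : Lt.mulVec (fun _ => 1) = 0 := (hker _).2 ⟨1, rfl⟩
  have hLtsym : Ltᵀ = Lt := hLt.isHermitian
  have honesLt : ∀ v : Fin k → ℝ, (fun _ => (1 : ℝ)) ⬝ᵥ Lt.mulVec v = 0 := by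
    intro v
    rw [Matrix.dotProduct_mulVec]
    nth_rewrite 1 [← hLtsym]
    rw [Matrix.vecMul_transpose, hLtones, zero_dotProduct]
  constructor
  · -- observability → eigenvector condition
    intro hobs μ v hv hLiv hRuv
    have hLtv : Lt.mulVec v = μ • M.mulVec v := by
      rw [← hMB, ← Matrix.mulVec_mulVec, hv, Matrix.mulVec_smul]
    by_cases hμ : μ = 0
    · have h0 : Lt.mulVec v = 0 := by rw [hLtv, hμ, zero_smul]
      obtain ⟨c, hc⟩ := (hker v).1 h0
      have hc' : v = c • (fun _ => (1 : ℝ)) := by rw [hc]; funext i; simp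
      rcases eq_or_ne c 0 with h | h
      · rw [hc, h]; rfl
      · exfalso
        apply hones
        have h2 := hLiv
        rw [hc', Matrix.mulVec_smul] at h2
        exact (smul_eq_zero.1 h2).resolve_left h
    · -- μ ≠ 0
      have honesMv : (fun _ => (1 : ℝ)) ⬝ᵥ M.mulVec v = 0 := by
        have h1 := honesLt v
        rw [hLtv, dotProduct_smul] at h1
        exact (smul_eq_zero.1 h1).resolve_left hμ
      have hnegev : (-B).mulVec v = (-μ) • v := by
        rw [Matrix.neg_mulVec, hv, neg_smul]
      have hpow : ∀ m : ℕ, ((-B) ^ m).mulVec v = (-μ) ^ m • v :=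
        pow_eigen (-B) v (-μ) hnegev
      have hx := hobs (Sum.elim v 0) ?_
      · funext i
        exact congrFun hx (Sum.inl i)
      intro j
      rcases Nat.even_or_odd j with ⟨m, hm⟩ | ⟨m, hm⟩
      · have hj : j = 2 * m := by omega
        subst hj
        refine ⟨?_, ?_, ?_⟩
        · rw [(pow_blocks B m).1, Matrix.fromBlocks_mulVec]
          simp only [Sum.elim_comp_inl, Sum.elim_comp_inr, Matrix.zero_mulVec,
            Matrix.mulVec_zero, add_zero, Sum.elim_inl, hpow m]
          rw [Matrix.mulVec_smul, hLiv, smul_zero]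
        · rw [(pow_blocks B m).1, Matrix.fromBlocks_mulVec]
          simp only [Sum.elim_comp_inl, Sum.elim_comp_inr, Matrix.zero_mulVec,
            Matrix.mulVec_zero, add_zero, Sum.elim_inl, hpow m]
          rw [Matrix.mulVec_smul, hRuv, smul_zero]
        · rw [(pow_blocks B m).1, Matrix.fromBlocks_mulVec]
          simp [Sum.elim_comp_inl, Sum.elim_comp_inr]
          show (fun _ => (1 : ℝ)) ⬝ᵥ M.mulVec 0 = 0
          simp
      · have hj : j = 2 * m + 1 := by omega
        subst hj
        refine ⟨?_, ?_, ?_⟩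
        · rw [(pow_blocks B m).2, Matrix.fromBlocks_mulVec]
          simp [Sum.elim_comp_inl, Sum.elim_comp_inr]
          show Li.mulVec 0 = 0
          exact Matrix.mulVec_zero Li
        · rw [(pow_blocks B m).2, Matrix.fromBlocks_mulVec]
          simp [Sum.elim_comp_inl, Sum.elim_comp_inr]
          show Ru.mulVec 0 = 0
          exact Matrix.mulVec_zero Ru
        · rw [(pow_blocks B m).2, Matrix.fromBlocks_mulVec]
          simp only [Sum.elim_comp_inl, Sum.elim_comp_inr, Matrix.zero_mulVec,
            Matrix.mulVec_zero, add_zero, Sum.elim_inr, hpow m]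
          rw [Matrix.mulVec_smul, dotProduct_smul, honesMv, smul_zero]
  · -- eigenvector condition → observability
    intro hR x hx
    rcases Nat.eq_zero_or_pos k with hk | hk
    · subst hk
      exfalso
      apply hones
      funext i
      simp [Matrix.mulVec, dotProduct]
    set x1 : Fin k → ℝ := x ∘ Sum.inl with hx1def
    set x2 : Fin k → ℝ := x ∘ Sum.inr with hx2def
    obtain ⟨l, hl⟩ := exists_ann hM hLt
    have hsign : ∀ m : ℕ, B ^ m = ((-1 : ℝ) ^ m) • (-B) ^ m := by
      intro m
      rw [← smul_pow, neg_smul, one_smul, neg_neg]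
    have hLix1 : ∀ m : ℕ, Li.mulVec ((B ^ m).mulVec x1) = 0 := by
      intro m
      have h := (hx (2 * m)).1
      rw [(pow_blocks B m).1, Matrix.fromBlocks_mulVec] at h
      simp only [Sum.elim_inl, Matrix.zero_mulVec, add_zero] at h
      rw [hsign m, Matrix.smul_mulVec, Matrix.mulVec_smul, h, smul_zero]
    have hRux1 : ∀ m : ℕ, Ru.mulVec ((B ^ m).mulVec x1) = 0 := by
      intro m
      have h := (hx (2 * m)).2.1
      rw [(pow_blocks B m).1, Matrix.fromBlocks_mulVec] at h
      simp only [Sum.elim_inl, Matrix.zero_mulVec, add_zero] at h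
      rw [hsign m, Matrix.smul_mulVec, Matrix.mulVec_smul, h, smul_zero]
    have hLiBx2 : ∀ m : ℕ, Li.mulVec ((B ^ m).mulVec (B.mulVec x2)) = 0 := by
      intro m
      have h := (hx (2 * m + 1)).1
      rw [(pow_blocks B m).2, Matrix.fromBlocks_mulVec] at h
      simp only [Sum.elim_inl, Matrix.zero_mulVec, zero_add] at h
      rw [← pow_succ, ← hx2def] at h
      rw [Matrix.mulVec_mulVec x2 (B ^ m) B, ← pow_succ, hsign (m + 1),
        Matrix.smul_mulVec, Matrix.mulVec_smul, h, smul_zero]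
    have hRuBx2 : ∀ m : ℕ, Ru.mulVec ((B ^ m).mulVec (B.mulVec x2)) = 0 := by
      intro m
      have h := (hx (2 * m + 1)).2.1
      rw [(pow_blocks B m).2, Matrix.fromBlocks_mulVec] at h
      simp only [Sum.elim_inl, Matrix.zero_mulVec, zero_add] at h
      rw [← pow_succ, ← hx2def] at h
      rw [Matrix.mulVec_mulVec x2 (B ^ m) B, ← pow_succ, hsign (m + 1),
        Matrix.smul_mulVec, Matrix.mulVec_smul, h, smul_zero]
    have honesMx2 : (fun _ => (1 : ℝ)) ⬝ᵥ M.mulVec x2 = 0 := by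
      have h := (hx 0).2.2
      simp [Matrix.one_mulVec] at h
      exact h
    have hx1z : x1 = 0 :=
      key_lemma B Ru Li hR l x1 (by rw [hl, Matrix.zero_mulVec]) hLix1 hRux1
    have hBx2z : B.mulVec x2 = 0 :=
      key_lemma B Ru Li hR l (B.mulVec x2) (by rw [hl, Matrix.zero_mulVec]) hLiBx2 hRuBx2
    have hLtx2 : Lt.mulVec x2 = 0 := by
      rw [← hMB, ← Matrix.mulVec_mulVec, hBx2z, Matrix.mulVec_zero]
    obtain ⟨c, hc⟩ := (hker x2).1 hLtx2
    have hc' : x2 = c • (fun _ => (1 : ℝ)) := by rw [hc]; funext i; simp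
    have honesne : (fun _ => (1 : ℝ)) ≠ (0 : Fin k → ℝ) := by
      intro h
      have := congrFun h ⟨0, hk⟩
      norm_num at this
    have hpos : 0 < (fun _ => (1 : ℝ)) ⬝ᵥ M.mulVec (fun _ => (1 : ℝ)) :=
      by simpa using hM.dotProduct_mulVec_pos honesne
    have hc0 : c = 0 := by
      rw [hc', Matrix.mulVec_smul, dotProduct_smul, smul_eq_mul] at honesMx2
      rcases mul_eq_zero.1 honesMx2 with h | h
      · exact h
      · exact absurd h (ne_of_gt hpos)
    have hx2z : x2 = 0 := by rw [hc, hc0]; rfl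
    funext i
    cases i with
    | inl i => exact congrFun hx1z i
    | inr i => exact congrFun hx2z i
end

section
/- Let M ≻ 0 block diagonal as diag(M_d, M_u), L = [[L_dd, L_di],[L_di^T, L_uu]] a connected weighted graph Laplacian, R = diag(R_d, R_u) with R_d ≻ 0, and L̃_u = L_uu - L_di^T L_dd^{-1} L_di. Then the following are equivalent: (ii) for each eigenvalue μ of M_u^{-1}L̃_u, ker(M_u^{-1}L̃_u - μI) ∩ ker(L_di) ∩ ker(R_u) = {0}; (iii) for each eigenvalue μ of M^{-1}L, every vector in ker(M^{-1}L - μI) ∩ ker(R) that has zero entries on the damped block is zero. -/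
open Matrix

/-- Equivalence of conditions (ii) and (iii) of Theorem 1: the eigenvector condition
for the Kron-reduced matrix `M_u⁻¹ L̃_u` is equivalent to the eigenvector condition
for the full matrix `M⁻¹ L`. -/
theorem kron_eigenvector_condition_equiv (nd nu : ℕ) (hnd : 0 < nd) (hnu : 0 < nu)
    (L : Matrix (Fin nd ⊕ Fin nu) (Fin nd ⊕ Fin nu) ℝ)
    (hL : L.PosSemidef)
    (hker : ∀ x : Fin nd ⊕ Fin nu → ℝ, L.mulVec x = 0 ↔ ∃ c : ℝ, x = fun _ => c)
    (hdd : IsUnit (L.submatrix Sum.inl Sum.inl))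
    (Md Rd : Matrix (Fin nd) (Fin nd) ℝ) (Mu Ru : Matrix (Fin nu) (Fin nu) ℝ)
    (hMd : Md.PosDef) (hMu : Mu.PosDef) (hRd : Rd.PosDef) (hRu : Ru.PosSemidef)
    (Ltu : Matrix (Fin nu) (Fin nu) ℝ)
    (hLtu : Ltu = L.submatrix Sum.inr Sum.inr -
      (L.submatrix Sum.inl Sum.inr)ᵀ * (L.submatrix Sum.inl Sum.inl)⁻¹ *
        L.submatrix Sum.inl Sum.inr) :
    (∀ (μ : ℝ) (v : Fin nu → ℝ),
        (Mu⁻¹ * Ltu).mulVec v = μ • v →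
        (L.submatrix Sum.inl Sum.inr).mulVec v = 0 →
        Ru.mulVec v = 0 → v = 0) ↔
      (∀ (μ : ℝ) (x : Fin nd ⊕ Fin nu → ℝ),
        ((Matrix.fromBlocks Md 0 0 Mu)⁻¹ * L).mulVec x = μ • x →
        (Matrix.fromBlocks Rd 0 0 Ru).mulVec x = 0 →
        (∀ i, x (Sum.inl i) = 0) → x = 0) := by
  set A := L.submatrix Sum.inl Sum.inl with hA
  set B := L.submatrix Sum.inl Sum.inr with hB
  set D := L.submatrix Sum.inr Sum.inr with hD
  -- L is symmetric
  have hLsym : Lᵀ = L := by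
    have h := hL.1
    rwa [Matrix.IsHermitian, conjTranspose_eq_transpose_of_trivial] at h
  have hC : L.submatrix Sum.inr Sum.inl = Bᵀ := by
    ext i j
    show L (Sum.inr i) (Sum.inl j) = L (Sum.inl j) (Sum.inr i)
    conv_lhs => rw [← hLsym]
    exact Matrix.transpose_apply L _ _
  have hLblocks : L = fromBlocks A B Bᵀ D := by
    rw [← hC, hA, hB, hD]
    exact (fromBlocks_toBlocks L).symm
  have hMdunit : IsUnit Md.det := isUnit_iff_isUnit_det _ |>.1 hMd.isUnit
  have hMuunit : IsUnit Mu.det := isUnit_iff_isUnit_det _ |>.1 hMu.isUnit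
  have hMinv : (fromBlocks Md 0 0 Mu)⁻¹ = fromBlocks Md⁻¹ 0 0 Mu⁻¹ := by
    apply inv_eq_right_inv
    rw [fromBlocks_multiply]
    rw [Matrix.mul_nonsing_inv _ hMdunit, Matrix.mul_nonsing_inv _ hMuunit]
    simp [fromBlocks_one]
  -- key computation: action of M⁻¹L on vectors of the form (0, v)
  have hkey : ∀ v : Fin nu → ℝ,
      ((fromBlocks Md 0 0 Mu)⁻¹ * L).mulVec (Sum.elim 0 v) =
        Sum.elim (Md⁻¹.mulVec (B.mulVec v)) (Mu⁻¹.mulVec (D.mulVec v)) := by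
    intro v
    have h1 : L.mulVec (Sum.elim 0 v) = Sum.elim (B.mulVec v) (D.mulVec v) := by
      rw [hLblocks, fromBlocks_mulVec]
      simp
    rw [← mulVec_mulVec, h1, hMinv, fromBlocks_mulVec]
    simp
  have hRkey : ∀ v : Fin nu → ℝ,
      (fromBlocks Rd 0 0 Ru).mulVec (Sum.elim 0 v) = Sum.elim (0 : Fin nd → ℝ) (Ru.mulVec v) := by
    intro v
    rw [fromBlocks_mulVec]
    simp
  have hLtukey : ∀ v : Fin nu → ℝ, B.mulVec v = 0 → Ltu.mulVec v = D.mulVec v := by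
    intro v hBv
    rw [hLtu, Matrix.sub_mulVec, ← Matrix.mulVec_mulVec, ← Matrix.mulVec_mulVec,
      hBv, Matrix.mulVec_zero, Matrix.mulVec_zero, sub_zero]
  constructor
  · -- (ii) → (iii)
    intro h μ x hx hRx hxd
    set v := x ∘ Sum.inr with hv
    have hxeq : x = Sum.elim (0 : Fin nd → ℝ) v := by
      funext i
      cases i with
      | inl i => exact hxd i
      | inr j => rfl
    rw [hxeq, hkey] at hx
    have hxinl : Md⁻¹.mulVec (B.mulVec v) = 0 := by
      funext i
      have h2 := congrFun hx (Sum.inl i)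
      simpa using h2
    have hBv : B.mulVec v = 0 := by
      have h3 := congrArg (Md.mulVec) hxinl
      rwa [Matrix.mulVec_mulVec, Matrix.mul_nonsing_inv _ hMdunit, Matrix.one_mulVec,
        Matrix.mulVec_zero] at h3
    have hxinr : Mu⁻¹.mulVec (D.mulVec v) = μ • v := by
      funext j
      have h4 := congrFun hx (Sum.inr j)
      simpa using h4
    have hRuv : Ru.mulVec v = 0 := by
      rw [hxeq, hRkey] at hRx
      funext j
      have h5 := congrFun hRx (Sum.inr j)
      simpa using h5
    have heig : (Mu⁻¹ * Ltu).mulVec v = μ • v := by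
      rw [← Matrix.mulVec_mulVec, hLtukey v hBv, hxinr]
    have hv0 : v = 0 := h μ v heig hBv hRuv
    rw [hxeq, hv0]
    funext i
    cases i <;> simp
  · -- (iii) → (ii)
    intro h μ v heig hBv hRuv
    have hx0 : Sum.elim (0 : Fin nd → ℝ) v = 0 := by
      refine h μ _ ?_ ?_ ?_
      · rw [hkey, hBv, Matrix.mulVec_zero]
        have h6 : Mu⁻¹.mulVec (D.mulVec v) = μ • v := by
          rw [← hLtukey v hBv, Matrix.mulVec_mulVec]
          exact heig
        rw [h6]
        funext i
        cases i <;> simp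
      · rw [hRkey, hRuv]
        funext i
        cases i <;> simp
      · intro i; simp
    funext j
    have h7 := congrFun hx0 (Sum.inr j)
    simpa using h7
end
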